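/- Let (X, ω) be a compact Hermitian manifold of complex dimension n and fix a point x ∈ X. Then for every nonzero v, w ∈ T_x^{1,0}X, the average of the t-Gauduchon altered holomorphic bisectional curvature over the unit sphere S^{2n−1} ⊂ T_x^{1,0}X (with respect to the Lebesgue measure dσ) satisfies: the average over w of ᵗH̃BC_ω(v, w) equals (1/(n·|v|²)) Σ_{i,k,ℓ} ᵗR_{ik̄kℓ̄} v_i v̄_ℓ, i.e. the quadratic form of ᵗRic⁽³⁾ in v divided by n|v|², and the average over v of ᵗH̃BC_ω(v, w) equals (1/(n·|w|²)) Σ_{i,j,k} ᵗR_{ij̄kī} w_k w̄_j, i.e. the quadratic form of ᵗRic⁽⁴⁾ in w divided by n|w|². In particular, the t-Gauduchon altered holomorphic bisectional curvature dominates the third and fourth t-Gauduchon Ricci curvatures. -/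

import Mathlib

noncomputable section

open scoped BigOperators ComplexConjugate
open Complex

/-- Abstract model of a (connected) complex manifold `X` of complex dimension `n`.
Only the global invariants of `X` that occur in the statements are recorded;
each field is explained by its docstring. -/
structure ComplexManifoldModel (n : ℕ) : Type 1 where
  /-- the underlying set of points of `X` -/
  Point : Type
  /-- `X` is nonempty -/
  nonempty_point : Nonempty Point
  /-- `X` is compact -/
  IsCompact : Prop
  /-- `X` belongs to the Fujiki class `𝒞`, i.e. it is bimeromorphic to a compact Kähler
  manifold -/
  IsFujikiClassC : Prop
  /-- the Kodaira dimension `κ(X)` of `X`, where `⊥` stands for `−∞` -/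
  kodairaDim : WithBot ℤ
  /-- the statement that the first Chern class `c₁(K_X)` of the canonical bundle of `X`
  vanishes in de Rham cohomology `H²_dR(X, ℝ)` -/
  c1_canonical_deRham_eq_zero : Prop

/-- Abstract model of a Hermitian metric `ω` on the complex manifold `M` of complex
dimension `n`, together with the line of Gauduchon connections
`ᵗ∇ := t·ᶜ∇ + (1−t)·ˡ∇` (where `ᶜ∇` is the Chern connection, recovered at `t = 1`, and
`ˡ∇` is the Lichnerowicz connection, recovered at `t = 0`); all tensors are recorded through
their components in local unitary frames of `(T^{1,0}X, ω)`.
A `(1,1)`-form `√−1·Σ a_{ij̄} e^i ∧ ē^j` is recorded as the family of its coefficient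
matrices `a : Frame → Fin n → Fin n → ℂ` over all local unitary frames. -/
structure HermitianMetricModel (n : ℕ) (M : ComplexManifoldModel n) : Type 1 where
  /-- the (total space of the) bundle of local unitary frames `{e_1, …, e_n}` of
  `(T^{1,0}X, ω)` -/
  Frame : Type
  /-- the base point of a unitary frame -/
  base : Frame → M.Point
  /-- every point of `X` carries a local unitary frame -/
  base_surjective : Function.Surjective base
  /-- `R t f i j k l = ᵗR_{i j̄ k ℓ̄}`: the components, in the local unitary frame `f`, of the
  `(1,1)`-part of the curvature tensor `ᵗR` of the `t`-Gauduchon connection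
  `ᵗ∇ = t·ᶜ∇ + (1−t)·ˡ∇`; in particular `R 1` are the Chern curvature components
  `ᶜR_{i j̄ k ℓ̄}` and `R 0` the Lichnerowicz ones. -/
  R : ℝ → Frame → Fin n → Fin n → Fin n → Fin n → ℂ
  /-- Hermitian symmetry of the `(1,1)`-part of the curvature of a Hermitian connection -/
  R_conj : ∀ t f i j k l, conj (R t f i j k l) = R t f j i l k
  /-- `R20 t f i j k l = ᵗR_{i j k ℓ̄}`: the components of the `(2,0)`-part of the curvature
  of the `t`-Gauduchon connection -/
  R20 : ℝ → Frame → Fin n → Fin n → Fin n → Fin n → ℂ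
  /-- `T f i j k = ᶜT^k_{ij} = g(ᶜT(e_i, e_j), ē_k)`: the Chern torsion components in the
  local unitary frame `f` -/
  T : Frame → Fin n → Fin n → Fin n → ℂ
  /-- antisymmetry of the Chern torsion in its lower indices -/
  T_antisymm : ∀ f i j k, T f i j k = - T f j i k
  /-- `Tcov f i k j l = ᶜT^ℓ_{ik,j}`: the components of the covariant derivative of the
  Chern torsion with respect to the Chern connection -/
  Tcov : Frame → Fin n → Fin n → Fin n → Fin n → ℂ
  /-- the metric `ω` is Kähler, i.e. `dω = 0` -/
  IsKaehler : Prop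
  /-- a Hermitian metric is Kähler if and only if its Chern torsion vanishes identically -/
  isKaehler_iff_torsion_eq_zero : IsKaehler ↔ ∀ f i j k, T f i j k = 0
  /-- the metric `ω` is balanced, i.e. `d(ω^{n−1}) = 0` -/
  IsBalanced : Prop
  /-- the metric `ω` is conformally balanced, i.e. `e^u·ω` is balanced for some smooth
  real function `u` -/
  IsConformallyBalanced : Prop
  /-- the metric `ω` is locally conformally Kähler: near every point it is conformal to a
  Kähler metric -/
  IsLcK : Prop
  /-- the coefficient matrices of the `(1,1)`-form `∂∂*ω` (`∂*` the formal adjoint of `∂`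
  with respect to `ω`) -/
  pdpsOmega : Frame → Fin n → Fin n → ℂ
  /-- the coefficient matrices of the `(1,1)`-form `∂̄∂̄*ω` -/
  bpbpsOmega : Frame → Fin n → Fin n → ℂ
  /-- the coefficient matrices of the `(1,1)`-form `√−1·Λ(∂∂̄ω)`, where `Λ` is the adjoint
  of the Lefschetz operator of `ω` -/
  sqrtNegOneLambdaDDbarOmega : Frame → Fin n → Fin n → ℂ
  /-- the statement that the `3`-form `∂∂̄∂̄*ω` vanishes identically -/
  pdbar_dbarstar_omega_eq_zero : Prop
  /-- the statement that the `2`-form `∂̄∂*ω` vanishes identically -/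
  dbar_pstar_omega_eq_zero : Prop
  /-- the given `(1,1)`-form (recorded through its coefficient matrices in unitary frames)
  is `d`-closed -/
  IsDClosed : (Frame → Fin n → Fin n → ℂ) → Prop
  /-- the given `(1,1)`-form represents the first Aeppli–Chern class `c₁^{AC}(K_X^{-1})`
  of the anticanonical bundle in the Aeppli cohomology group `H_A^{1,1}(X)` -/
  RepresentsAeppliAnticanonical : (Frame → Fin n → Fin n → ℂ) → Prop
  /-- the given `(1,1)`-form represents the first Chern class `c₁(K_X^{-1})` in de Rham
  cohomology `H²_dR(X, ℝ)` -/
  RepresentsDeRhamAnticanonical : (Frame → Fin n → Fin n → ℂ) → Prop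
  /-- the given `2`-form represents `2π·c₁(K_X^{-1})` in de Rham cohomology -/
  Represents2PiDeRhamAnticanonical : (Frame → Fin n → Fin n → ℂ) → Prop
  /-- the given `(1,1)`-form represents `c₁(K_X^{-1})` in Dolbeault cohomology
  `H^{1,1}_{∂̄}(X)` -/
  RepresentsDolbeaultAnticanonical : (Frame → Fin n → Fin n → ℂ) → Prop
  /-- the given `(1,1)`-form represents the first Bott–Chern class `c₁^{BC}(K_X^{-1})` in
  Bott–Chern cohomology `H^{1,1}_{BC}(X)` -/
  RepresentsBottChernAnticanonical : (Frame → Fin n → Fin n → ℂ) → Prop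
  /-- the statement that `c₁(K_X^{-1}) = c₁^{AC}(K_X^{-1})` (the natural map
  `H²_dR(X,ℝ) → H_A^{1,1}(X)` identifies the two classes) -/
  c1_eq_c1AC : Prop
  /-- the `t`-Gauduchon scalar curvature `ᵗScal_ω = tr_ω(ᵗRic⁽¹⁾_ω)` as a function on `X` -/
  scal : ℝ → M.Point → ℝ
  /-- `ᵗScal_ω = Σ_{i,k} ᵗR_{i ī k k̄}` in any local unitary frame -/
  scal_spec : ∀ (t : ℝ) (f : Frame), scal t (base f) = (∑ i, ∑ k, R t f i i k k).re
  /-- the `t`-Gauduchon altered scalar curvature `ᵗS̃cal_ω = tr_ω(ᵗRic⁽³⁾_ω)` as a function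
  on `X` -/
  scalAlt : ℝ → M.Point → ℝ
  /-- `ᵗS̃cal_ω = Σ_{i,k} ᵗR_{i k̄ k ī}` in any local unitary frame -/
  scalAlt_spec : ∀ (t : ℝ) (f : Frame), scalAlt t (base f) = (∑ i, ∑ k, R t f i k k i).re
  /-- the function `d*τ` on `X`, where `τ` is the torsion `(1,0)`-form of `ω`
  (defined by `∂ω^{n−1} = τ ∧ ω^{n−1}`) and `d*` the formal adjoint of `d` -/
  dstarTau : M.Point → ℝ
  /-- the pointwise squared norm `|τ|²_ω` of the torsion `(1,0)`-form -/
  normSqTau : M.Point → ℝ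
  /-- `|τ|² = Σ_i |τ_i|²` with `τ_i = Σ_k ᶜT^k_{ik}` in any local unitary frame -/
  normSqTau_spec : ∀ f : Frame,
    normSqTau (base f) = ∑ i, Complex.normSq (∑ k, T f i k k)
  /-- the pointwise squared norm `|ᶜT|²_ω` of the Chern torsion -/
  normSqT : M.Point → ℝ
  /-- `|ᶜT|² = Σ_{i,j,k} |ᶜT^k_{ij}|²` in any local unitary frame -/
  normSqT_spec : ∀ f : Frame,
    normSqT (base f) = ∑ i, ∑ j, ∑ k, Complex.normSq (T f i j k)
  /-- integration against the volume form: `φ ↦ ∫_X φ ωⁿ` -/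
  integral : (M.Point → ℝ) → ℝ
  /-- the coefficient matrices of the `2`-form `d(Jϑ)`, where `ϑ` is the Lee form of `ω`
  (the unique `1`-form with `dω = ϑ ∧ ω` when `ω` is locally conformally Kähler) and `J`
  the complex structure -/
  dJLee : Frame → Fin n → Fin n → ℂ
  /-- `gRic1OfForm t α` records the coefficient matrices (in the unitary frames of `ω`) of
  the first `t`-Gauduchon Ricci form of the Hermitian metric whose associated `(1,1)`-form
  has coefficient matrices `α` (meaningful when `α` is positive definite) -/
  gRic1OfForm : ℝ → (Frame → Fin n → Fin n → ℂ) → (Frame → Fin n → Fin n → ℂ)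
  /-- applied to the form of `ω` itself (the identity matrix in unitary frames of `ω`),
  `gRic1OfForm` recovers the first `t`-Gauduchon Ricci form of `ω` -/
  gRic1OfForm_self : ∀ t : ℝ,
    gRic1OfForm t (fun _ i j => if i = j then 1 else 0) = fun f i j => ∑ k, R t f i j k k

namespace HermitianMetricModel

variable {n : ℕ} {M : ComplexManifoldModel n} (g : HermitianMetricModel n M)

/-- the coefficient matrices of the first `t`-Gauduchon Ricci form
`ᵗRic⁽¹⁾_ω = √−1·Σ_k ᵗR_{i j̄ k k̄} e^i ∧ ē^j` -/
def gRic1 (t : ℝ) : g.Frame → Fin n → Fin n → ℂ :=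
  fun f i j => ∑ k, g.R t f i j k k

/-- the coefficient matrices of the second `t`-Gauduchon Ricci form
`ᵗRic⁽²⁾_ω = √−1·Σ_i ᵗR_{i ī k ℓ̄} e^k ∧ ē^ℓ` -/
def gRic2 (t : ℝ) : g.Frame → Fin n → Fin n → ℂ :=
  fun f k l => ∑ i, g.R t f i i k l

/-- the coefficient matrices of the third `t`-Gauduchon Ricci form
`ᵗRic⁽³⁾_ω = √−1·Σ_k ᵗR_{i k̄ k ℓ̄} e^i ∧ ē^ℓ` -/
def gRic3 (t : ℝ) : g.Frame → Fin n → Fin n → ℂ :=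
  fun f i l => ∑ k, g.R t f i k k l

/-- the coefficient matrices of the fourth `t`-Gauduchon Ricci form
`ᵗRic⁽⁴⁾_ω = √−1·Σ_i ᵗR_{i j̄ k ī} e^k ∧ ē^j` -/
def gRic4 (t : ℝ) : g.Frame → Fin n → Fin n → ℂ :=
  fun f k j => ∑ i, g.R t f i j k i

/-- the coefficient matrices of the torsion `(1,1)`-form
`ᶜT^◇ = √−1·Σ_q ᶜT^k_{iq}·conj(ᶜT^k_{jq}) e^i ∧ ē^j` -/
def Tdiamond : g.Frame → Fin n → Fin n → ℂ :=
  fun f i j => ∑ q, ∑ k, g.T f i q k * conj (g.T f j q k)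

/-- the coefficient matrices of the torsion `(1,1)`-form
`ᶜT^° = √−1·Σ_{s,p} ᶜT^j_{sp}·conj(ᶜT^i_{sp}) e^i ∧ ē^j` -/
def Tcirc : g.Frame → Fin n → Fin n → ℂ :=
  fun f i j => ∑ s, ∑ p, g.T f s p j * conj (g.T f s p i)

/-- the coefficient matrices of the torsion `(1,1)`-form
`ᶜT^♡ = √−1·Σ_q ᶜT^j_{iq}·conj(ᶜT^k_{kq}) e^i ∧ ē^j` -/
def Theart : g.Frame → Fin n → Fin n → ℂ :=
  fun f i j => ∑ q, ∑ k, g.T f i q j * conj (g.T f k q k)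

/-- the conjugate of a `(1,1)`-form in the coefficient-matrix description -/
def conjForm (α : g.Frame → Fin n → Fin n → ℂ) : g.Frame → Fin n → Fin n → ℂ :=
  fun f i j => conj (α f j i)

/-- pointwise positive definiteness of a (real) `(1,1)`-form recorded through its coefficient
matrices in unitary frames -/
def FormPos (α : g.Frame → Fin n → Fin n → ℂ) : Prop :=
  ∀ f : g.Frame, ∀ v : Fin n → ℂ, v ≠ 0 →
    0 < (∑ i, ∑ j, α f i j * v i * conj (v j)).re

/-- pointwise negative definiteness -/
def FormNeg (α : g.Frame → Fin n → Fin n → ℂ) : Prop :=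
  ∀ f : g.Frame, ∀ v : Fin n → ℂ, v ≠ 0 →
    (∑ i, ∑ j, α f i j * v i * conj (v j)).re < 0

/-- pointwise nonnegativity (positive semidefiniteness) -/
def FormNonneg (α : g.Frame → Fin n → Fin n → ℂ) : Prop :=
  ∀ f : g.Frame, ∀ v : Fin n → ℂ,
    0 ≤ (∑ i, ∑ j, α f i j * v i * conj (v j)).re

/-- pointwise nonpositivity -/
def FormNonpos (α : g.Frame → Fin n → Fin n → ℂ) : Prop :=
  ∀ f : g.Frame, ∀ v : Fin n → ℂ,
    (∑ i, ∑ j, α f i j * v i * conj (v j)).re ≤ 0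

/-- the `t`-Gauduchon holomorphic sectional curvature
`ᵗHSC_ω(v) = ᵗR(v, v̄, v, v̄)/|v|⁴_ω`, evaluated on the components `v` of a `(1,0)`-tangent
vector in the unitary frame `f` -/
def hsc (t : ℝ) (f : g.Frame) (v : Fin n → ℂ) : ℝ :=
  (∑ i, ∑ j, ∑ k, ∑ l, g.R t f i j k l * v i * conj (v j) * v k * conj (v l)).re /
    (∑ i, Complex.normSq (v i)) ^ 2

/-- the `t`-Gauduchon holomorphic bisectional curvature
`ᵗHBC_ω(u, v) = ᵗR(u, ū, v, v̄)/(|u|²_ω·|v|²_ω)` in frame components -/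
def hbc (t : ℝ) (f : g.Frame) (u v : Fin n → ℂ) : ℝ :=
  (∑ i, ∑ j, ∑ k, ∑ l, g.R t f i j k l * u i * conj (u j) * v k * conj (v l)).re /
    ((∑ i, Complex.normSq (u i)) * (∑ i, Complex.normSq (v i)))

/-- the `t`-Gauduchon altered holomorphic bisectional curvature
`ᵗH̃BC_ω(u, v) = ᵗR(u, v̄, v, ū)/(|u|²_ω·|v|²_ω)` in frame components -/
def hbcAlt (t : ℝ) (f : g.Frame) (u v : Fin n → ℂ) : ℝ :=
  (∑ i, ∑ j, ∑ k, ∑ l, g.R t f i j k l * u i * conj (v j) * v k * conj (u l)).re /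
    ((∑ i, Complex.normSq (u i)) * (∑ i, Complex.normSq (v i)))

/-- the `t`-Gauduchon altered holomorphic sectional curvature
`ᵗH̃SC_ω(λ) = (1/|λ|²_ω)·Σ_{α,γ} (ᵗR_{α ᾱ γ γ̄} + ᵗR_{α γ̄ γ ᾱ})·λ_α·λ_γ`, a function of a
local unitary frame `f` and `λ ∈ ℝⁿ \ {0}` -/
def hscAlt (t : ℝ) (f : g.Frame) (lam : Fin n → ℝ) : ℝ :=
  (∑ a, ∑ c, ((g.R t f a a c c + g.R t f a c c a) * (lam a : ℂ) * (lam c : ℂ))).re /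
    ∑ i, (lam i) ^ 2

end HermitianMetricModel

open MeasureTheory

instance euclideanComplexMeasurableSpace (n : ℕ) :
    MeasurableSpace (EuclideanSpace ℂ (Fin n)) := borel _

instance euclideanComplexBorelSpace (n : ℕ) :
    BorelSpace (EuclideanSpace ℂ (Fin n)) := ⟨rfl⟩

/-- The Lebesgue (round) surface measure on the unit sphere `S^{2n−1} ⊂ ℂⁿ`, obtained from
an additive Haar measure on `ℂⁿ` by the polar decomposition; it is a positive multiple of
the round measure `dσ`, so averages against it agree with the normalized averages
`⨍ = ((n−1)!/(2πⁿ))∫_{S^{2n−1}} · dσ`. -/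
def sphereMeasure (n : ℕ) :
    Measure (Metric.sphere (0 : EuclideanSpace ℂ (Fin n)) 1) :=
  ((Module.Basis.ofVectorSpace ℝ (EuclideanSpace ℂ (Fin n))).addHaar).toSphere

namespace GaudAux

open Metric Set Finset
open scoped Pointwise


variable {n : ℕ}

/-- multiplication by `I` as a real-linear isometry of `ℂ` -/
def mulI : ℂ ≃ₗᵢ[ℝ] ℂ where
  toLinearEquiv :=
  { toFun := fun z => Complex.I * z
    map_add' := fun a b => mul_add _ a b
    map_smul' := fun r z => by
      simp only [RingHom.id_apply, Complex.real_smul]; ring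
    invFun := fun z => -Complex.I * z
    left_inv := fun z => by
      simp only [← mul_assoc, neg_mul, Complex.I_mul_I]; ring
    right_inv := fun z => by
      simp only [← mul_assoc, mul_neg, neg_mul, Complex.I_mul_I]; ring }
  norm_map' := fun z => by simp

@[simp] lemma mulI_apply (z : ℂ) : mulI z = Complex.I * z := rfl

/-- phase rotation by `I` in the `j`-th coordinate -/
def phaseAt (j : Fin n) :
    EuclideanSpace ℂ (Fin n) ≃ₗᵢ[ℝ] EuclideanSpace ℂ (Fin n) :=
  LinearIsometryEquiv.piLpCongrRight 2
    (fun i => if i = j then mulI else LinearIsometryEquiv.refl ℝ ℂ)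

lemma phaseAt_apply (j : Fin n) (x : EuclideanSpace ℂ (Fin n)) (i : Fin n) :
    phaseAt j x i = if i = j then Complex.I * x i else x i := by
  simp only [phaseAt, LinearIsometryEquiv.piLpCongrRight_apply]
  by_cases h : i = j
  · subst h; simp
  · simp [h]

/-- swap of two coordinates -/
def swapAt (j k : Fin n) :
    EuclideanSpace ℂ (Fin n) ≃ₗᵢ[ℝ] EuclideanSpace ℂ (Fin n) :=
  LinearIsometryEquiv.piLpCongrLeft 2 ℝ ℂ (Equiv.swap j k)

lemma swapAt_apply (j k : Fin n) (x : EuclideanSpace ℂ (Fin n)) (i : Fin n) :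
    swapAt j k x i = x (Equiv.swap j k i) := by
  simp only [swapAt, LinearIsometryEquiv.piLpCongrLeft_apply]
  rw [show (Equiv.piCongrLeft' (fun _ => ℂ) (Equiv.swap j k) x) i
    = x ((Equiv.swap j k).symm i) from rfl, Equiv.symm_swap]

lemma haar_preimage_isometry
    (U : EuclideanSpace ℂ (Fin n) ≃ₗᵢ[ℝ] EuclideanSpace ℂ (Fin n))
    (s : Set (EuclideanSpace ℂ (Fin n))) :
    (Module.Basis.ofVectorSpace ℝ (EuclideanSpace ℂ (Fin n))).addHaar (⇑U ⁻¹' s)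
      = (Module.Basis.ofVectorSpace ℝ (EuclideanSpace ℂ (Fin n))).addHaar s := by
  set μ := (Module.Basis.ofVectorSpace ℝ (EuclideanSpace ℂ (Fin n))).addHaar with hμ
  have hdet := Measure.addHaar_preimage_linearEquiv μ U.toLinearEquiv
  set c := ENNReal.ofReal |LinearMap.det ((U.toLinearEquiv.symm :
      EuclideanSpace ℂ (Fin n) ≃ₗ[ℝ] EuclideanSpace ℂ (Fin n)) :
      EuclideanSpace ℂ (Fin n) →ₗ[ℝ] EuclideanSpace ℂ (Fin n))| with hc
  have hcoe : ⇑U.toLinearEquiv = ⇑U := rfl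
  have hball : ⇑U ⁻¹' ball (0 : EuclideanSpace ℂ (Fin n)) 1 = ball 0 1 := by
    ext x
    simp [mem_ball_zero_iff, U.norm_map]
  have hb0 : μ (ball (0 : EuclideanSpace ℂ (Fin n)) 1) ≠ 0 :=
    (measure_ball_pos _ _ one_pos).ne'
  have hbt : μ (ball (0 : EuclideanSpace ℂ (Fin n)) 1) ≠ ⊤ :=
    measure_ball_lt_top.ne
  have h1 : c = 1 := by
    have h2 := hdet (ball 0 1)
    rw [hcoe, hball] at h2
    calc c = c * (μ (ball 0 1) * (μ (ball 0 1))⁻¹) := by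
            rw [ENNReal.mul_inv_cancel hb0 hbt, mul_one]
      _ = (c * μ (ball 0 1)) * (μ (ball 0 1))⁻¹ := by rw [mul_assoc]
      _ = μ (ball 0 1) * (μ (ball 0 1))⁻¹ := by rw [← h2]
      _ = 1 := ENNReal.mul_inv_cancel hb0 hbt
  have h3 := hdet s
  rw [hcoe] at h3
  rw [h3, h1, one_mul]

/-- the induced map on the unit sphere -/
def sphereMap (U : EuclideanSpace ℂ (Fin n) ≃ₗᵢ[ℝ] EuclideanSpace ℂ (Fin n))
    (w : Metric.sphere (0 : EuclideanSpace ℂ (Fin n)) 1) :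
    Metric.sphere (0 : EuclideanSpace ℂ (Fin n)) 1 :=
  ⟨U w, by
    have hw := w.2
    rw [mem_sphere_zero_iff_norm] at hw ⊢
    rw [U.norm_map]; exact hw⟩

lemma continuous_sphereMap (U : EuclideanSpace ℂ (Fin n) ≃ₗᵢ[ℝ] EuclideanSpace ℂ (Fin n)) :
    Continuous (sphereMap U) :=
  (U.continuous.comp continuous_subtype_val).subtype_mk _

lemma map_sphereMap (U : EuclideanSpace ℂ (Fin n) ≃ₗᵢ[ℝ] EuclideanSpace ℂ (Fin n)) :
    (sphereMeasure n).map (sphereMap U) = sphereMeasure n := by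
  refine Measure.ext fun s hs => ?_
  rw [Measure.map_apply (continuous_sphereMap U).measurable hs]
  have hs' : MeasurableSet (sphereMap U ⁻¹' s) := (continuous_sphereMap U).measurable hs
  unfold sphereMeasure
  rw [Measure.toSphere_apply' _ hs', Measure.toSphere_apply' _ hs]
  congr 1
  have himg : (((↑) : Metric.sphere (0 : EuclideanSpace ℂ (Fin n)) 1 → EuclideanSpace ℂ (Fin n))
      '' (sphereMap U ⁻¹' s)) = ⇑U ⁻¹' ((↑) '' s) := by
    ext y
    constructor
    · rintro ⟨w, hw, rfl⟩
      exact ⟨sphereMap U w, hw, rfl⟩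
    · rintro ⟨z, hz, hzy⟩
      have hy1 : y ∈ Metric.sphere (0 : EuclideanSpace ℂ (Fin n)) 1 := by
        rw [mem_sphere_zero_iff_norm, ← U.norm_map y, ← hzy]
        exact mem_sphere_zero_iff_norm.mp z.2
      refine ⟨⟨y, hy1⟩, ?_, rfl⟩
      have : sphereMap U ⟨y, hy1⟩ = z := Subtype.ext (by simp [sphereMap, hzy])
      show sphereMap U ⟨y, hy1⟩ ∈ s
      rw [this]; exact hz
  rw [himg]
  have hsmul : Ioo (0:ℝ) 1 • (⇑U ⁻¹' ((↑) '' s)) = ⇑U ⁻¹' (Ioo (0:ℝ) 1 • ((↑) '' s)) := by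
    ext x
    constructor
    · intro hx
      rcases Set.mem_smul.mp hx with ⟨r, hr, b, hb, rfl⟩
      exact Set.mem_smul.mpr ⟨r, hr, U b, hb, (_root_.map_smul U r b).symm⟩
    · intro hx
      rcases Set.mem_smul.mp hx with ⟨r, hr, b, hb, hx'⟩
      refine Set.mem_smul.mpr ⟨r, hr, U.symm b,
        by rw [Set.mem_preimage, U.apply_symm_apply]; exact hb, ?_⟩
      apply U.injective
      rw [_root_.map_smul, U.apply_symm_apply]
      exact hx'
  rw [hsmul, haar_preimage_isometry]

lemma integral_comp_sphereMap
    (U : EuclideanSpace ℂ (Fin n) ≃ₗᵢ[ℝ] EuclideanSpace ℂ (Fin n))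
    {G : Type*} [NormedAddCommGroup G] [NormedSpace ℝ G]
    (f : Metric.sphere (0 : EuclideanSpace ℂ (Fin n)) 1 → G) (hf : Continuous f) :
    ∫ w, f (sphereMap U w) ∂(sphereMeasure n) = ∫ w, f w ∂(sphereMeasure n) := by
  conv_rhs => rw [← map_sphereMap U]
  rw [integral_map (continuous_sphereMap U).aemeasurable hf.aestronglyMeasurable]


instance instFinSphereMeasure : IsFiniteMeasure (sphereMeasure n) := by
  unfold sphereMeasure; infer_instance

lemma nontrivialE (hn : 0 < n) : Nontrivial (EuclideanSpace ℂ (Fin n)) := by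
  refine ⟨⟨0, EuclideanSpace.single ⟨0, hn⟩ 1, fun h => ?_⟩⟩
  have : (0 : EuclideanSpace ℂ (Fin n)) (⟨0, hn⟩ : Fin n) =
      EuclideanSpace.single (⟨0, hn⟩ : Fin n) (1 : ℂ) (⟨0, hn⟩ : Fin n) :=
    congrArg (fun x : EuclideanSpace ℂ (Fin n) => x ⟨0, hn⟩) h
  rw [EuclideanSpace.single_apply] at this
  simp at this

lemma sphereMeasure_univ_ne_zero (hn : 0 < n) : sphereMeasure n univ ≠ 0 := by
  haveI := nontrivialE (n := n) hn
  unfold sphereMeasure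
  rw [Measure.toSphere_apply_univ]
  refine mul_ne_zero ?_ (measure_ball_pos _ _ one_pos).ne'
  exact_mod_cast Nat.cast_ne_zero.mpr (Module.finrank_pos (R := ℝ)
    (M := EuclideanSpace ℂ (Fin n))).ne'

lemma continuous_coord (j : Fin n) :
    Continuous fun w : Metric.sphere (0 : EuclideanSpace ℂ (Fin n)) 1 =>
      (w : EuclideanSpace ℂ (Fin n)) j :=
  ((EuclideanSpace.proj j : EuclideanSpace ℂ (Fin n) →L[ℂ] ℂ).continuous).comp
    continuous_subtype_val

lemma sum_normSq_coord (w : Metric.sphere (0 : EuclideanSpace ℂ (Fin n)) 1) :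
    ∑ i, Complex.normSq ((w : EuclideanSpace ℂ (Fin n)) i) = 1 := by
  have hw : ‖(w : EuclideanSpace ℂ (Fin n))‖ = 1 := mem_sphere_zero_iff_norm.mp w.2
  have hs : Real.sqrt (∑ i, ‖(w : EuclideanSpace ℂ (Fin n)) i‖ ^ 2) = 1 := by
    rw [← EuclideanSpace.norm_eq]; exact hw
  have hnn : 0 ≤ ∑ i, ‖(w : EuclideanSpace ℂ (Fin n)) i‖ ^ 2 :=
    Finset.sum_nonneg fun _ _ => sq_nonneg _
  have h2 : ∑ i, ‖(w : EuclideanSpace ℂ (Fin n)) i‖ ^ 2 = 1 := by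
    nlinarith [Real.sq_sqrt hnn]
  calc ∑ i, Complex.normSq ((w : EuclideanSpace ℂ (Fin n)) i)
      = ∑ i, ‖(w : EuclideanSpace ℂ (Fin n)) i‖ ^ 2 :=
        Finset.sum_congr rfl fun i _ => by
          rw [Complex.normSq_eq_norm_sq]
    _ = 1 := h2

lemma coordvec_ne_zero (w : Metric.sphere (0 : EuclideanSpace ℂ (Fin n)) 1) :
    (fun i => (w : EuclideanSpace ℂ (Fin n)) i) ≠ 0 := by
  intro h
  have h1 := sum_normSq_coord w
  have h2 : ∀ i, (w : EuclideanSpace ℂ (Fin n)) i = 0 := fun i => congrFun h i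
  simp [h2] at h1

lemma integrable_mom (j k : Fin n) :
    Integrable (fun w : Metric.sphere (0 : EuclideanSpace ℂ (Fin n)) 1 =>
      conj ((w : EuclideanSpace ℂ (Fin n)) j) * ((w : EuclideanSpace ℂ (Fin n)) k))
      (sphereMeasure n) := by
  apply Continuous.integrable_of_hasCompactSupport
  · exact ((continuous_coord j).star).mul (continuous_coord k)
  · exact HasCompactSupport.of_compactSpace _

lemma integrable_normSq_coord (j : Fin n) :
    Integrable (fun w : Metric.sphere (0 : EuclideanSpace ℂ (Fin n)) 1 =>
      Complex.normSq ((w : EuclideanSpace ℂ (Fin n)) j)) (sphereMeasure n) := by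
  apply Continuous.integrable_of_hasCompactSupport
  · exact Complex.continuous_normSq.comp (continuous_coord j)
  · exact HasCompactSupport.of_compactSpace _

lemma moment_off {j k : Fin n} (hjk : j ≠ k) :
    ∫ w, conj ((w : EuclideanSpace ℂ (Fin n)) j) * ((w : EuclideanSpace ℂ (Fin n)) k)
      ∂(sphereMeasure n) = 0 := by
  set Iν := ∫ w, conj ((w : EuclideanSpace ℂ (Fin n)) j) *
      ((w : EuclideanSpace ℂ (Fin n)) k) ∂(sphereMeasure n) with hIν
  have hcont : Continuous fun w : Metric.sphere (0 : EuclideanSpace ℂ (Fin n)) 1 =>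
      conj ((w : EuclideanSpace ℂ (Fin n)) j) * ((w : EuclideanSpace ℂ (Fin n)) k) :=
    ((continuous_coord j).star).mul (continuous_coord k)
  have h := integral_comp_sphereMap (phaseAt j) _ hcont
  have hptw : ∀ w : Metric.sphere (0 : EuclideanSpace ℂ (Fin n)) 1,
      conj ((sphereMap (phaseAt j) w : EuclideanSpace ℂ (Fin n)) j) *
        ((sphereMap (phaseAt j) w : EuclideanSpace ℂ (Fin n)) k)
      = (-Complex.I) * (conj ((w : EuclideanSpace ℂ (Fin n)) j) *
          ((w : EuclideanSpace ℂ (Fin n)) k)) := by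
    intro w
    have h1 : ((sphereMap (phaseAt j) w : EuclideanSpace ℂ (Fin n)))
        = phaseAt j (w : EuclideanSpace ℂ (Fin n)) := rfl
    rw [h1, phaseAt_apply, phaseAt_apply, if_pos rfl, if_neg (fun hkj => hjk hkj.symm)]
    rw [map_mul, Complex.conj_I]
    ring
  simp only [hptw] at h
  rw [integral_const_mul, ← hIν] at h
  have hne : (1 + Complex.I) ≠ 0 := by
    intro h0
    have := congrArg Complex.re h0
    simp at this
  have h2 : (1 + Complex.I) * Iν = 0 := by linear_combination -h
  rcases mul_eq_zero.mp h2 with h3 | h3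
  · exact absurd h3 hne
  · exact h3

lemma moment_diag_eq (j k : Fin n) :
    ∫ w, Complex.normSq ((w : EuclideanSpace ℂ (Fin n)) j) ∂(sphereMeasure n)
      = ∫ w, Complex.normSq ((w : EuclideanSpace ℂ (Fin n)) k) ∂(sphereMeasure n) := by
  have hcont : Continuous fun w : Metric.sphere (0 : EuclideanSpace ℂ (Fin n)) 1 =>
      Complex.normSq ((w : EuclideanSpace ℂ (Fin n)) j) :=
    Complex.continuous_normSq.comp (continuous_coord j)
  have h := integral_comp_sphereMap (swapAt j k) _ hcont
  have hptw : ∀ w : Metric.sphere (0 : EuclideanSpace ℂ (Fin n)) 1,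
      Complex.normSq ((sphereMap (swapAt j k) w : EuclideanSpace ℂ (Fin n)) j)
        = Complex.normSq ((w : EuclideanSpace ℂ (Fin n)) k) := by
    intro w
    have h1 : ((sphereMap (swapAt j k) w : EuclideanSpace ℂ (Fin n)))
        = swapAt j k (w : EuclideanSpace ℂ (Fin n)) := rfl
    rw [h1, swapAt_apply, Equiv.swap_apply_left]
  simp only [hptw] at h
  exact h.symm

lemma moment_diag (hn : 0 < n) (j : Fin n) :
    ∫ w, Complex.normSq ((w : EuclideanSpace ℂ (Fin n)) j) ∂(sphereMeasure n)
      = (sphereMeasure n univ).toReal / n := by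
  have hsum : ∑ k : Fin n, ∫ w, Complex.normSq ((w : EuclideanSpace ℂ (Fin n)) k)
      ∂(sphereMeasure n) = (sphereMeasure n univ).toReal := by
    rw [← integral_finset_sum _ (fun k _ => integrable_normSq_coord k)]
    simp only [sum_normSq_coord]
    simp
    rfl
  have hall : ∀ k : Fin n, ∫ w, Complex.normSq ((w : EuclideanSpace ℂ (Fin n)) k)
      ∂(sphereMeasure n) = ∫ w, Complex.normSq ((w : EuclideanSpace ℂ (Fin n)) j)
      ∂(sphereMeasure n) := fun k => moment_diag_eq k j
  rw [Finset.sum_congr rfl (fun k _ => hall k), Finset.sum_const, Finset.card_univ,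
    Fintype.card_fin, nsmul_eq_mul] at hsum
  rw [← hsum]
  field_simp

lemma moment (hn : 0 < n) (j k : Fin n) :
    ∫ w, conj ((w : EuclideanSpace ℂ (Fin n)) j) * ((w : EuclideanSpace ℂ (Fin n)) k)
      ∂(sphereMeasure n)
      = if j = k then (((sphereMeasure n univ).toReal / n : ℝ) : ℂ) else 0 := by
  by_cases h : j = k
  · subst h
    rw [if_pos rfl]
    have hpt : ∀ w : Metric.sphere (0 : EuclideanSpace ℂ (Fin n)) 1,
        conj ((w : EuclideanSpace ℂ (Fin n)) j) * ((w : EuclideanSpace ℂ (Fin n)) j)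
          = ((Complex.normSq ((w : EuclideanSpace ℂ (Fin n)) j) : ℝ) : ℂ) := fun w => by
      rw [mul_comm, Complex.mul_conj]
    simp only [hpt]
    have hcast : ∫ w : Metric.sphere (0 : EuclideanSpace ℂ (Fin n)) 1,
        ((Complex.normSq ((w : EuclideanSpace ℂ (Fin n)) j) : ℝ) : ℂ) ∂(sphereMeasure n)
        = ((∫ w : Metric.sphere (0 : EuclideanSpace ℂ (Fin n)) 1,
            Complex.normSq ((w : EuclideanSpace ℂ (Fin n)) j) ∂(sphereMeasure n) : ℝ) : ℂ) :=
      integral_ofReal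
    rw [hcast, moment_diag hn j]
  · rw [if_neg h]
    exact moment_off h

end GaudAux

namespace GaudAux

open Metric Set Finset
open scoped Pointwise

variable {n : ℕ}

lemma sum_normSq_pos (v : Fin n → ℂ) (hv : v ≠ 0) : 0 < ∑ i, Complex.normSq (v i) := by
  obtain ⟨i, hi⟩ : ∃ i, v i ≠ 0 := by
    by_contra h
    push_neg at h
    exact hv (funext h)
  exact Finset.sum_pos' (fun i _ => Complex.normSq_nonneg _)
    ⟨i, Finset.mem_univ i, Complex.normSq_pos.mpr hi⟩

lemma sum_swap4_left {α : Type*} [AddCommMonoid α] (f : Fin n → Fin n → Fin n → Fin n → α) :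
    ∑ i, ∑ j, ∑ k, ∑ l, f i j k l = ∑ j, ∑ k, ∑ i, ∑ l, f i j k l := by
  rw [Finset.sum_comm]
  exact Finset.sum_congr rfl fun j _ => Finset.sum_comm

lemma sum_swap3 {α : Type*} [AddCommMonoid α] (f : Fin n → Fin n → Fin n → α) :
    ∑ i, ∑ j, ∑ k, f i j k = ∑ k, ∑ j, ∑ i, f i j k := by
  calc ∑ i, ∑ j, ∑ k, f i j k
      = ∑ i, ∑ k, ∑ j, f i j k :=
        Finset.sum_congr rfl fun i _ => Finset.sum_comm
    _ = ∑ k, ∑ i, ∑ j, f i j k := Finset.sum_comm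
    _ = ∑ k, ∑ j, ∑ i, f i j k :=
        Finset.sum_congr rfl fun k _ => Finset.sum_comm

lemma sum_swap4_last {α : Type*} [AddCommMonoid α] (f : Fin n → Fin n → Fin n → Fin n → α) :
    ∑ i, ∑ j, ∑ k, ∑ l, f i j k l = ∑ l, ∑ i, ∑ j, ∑ k, f i j k l := by
  calc ∑ i, ∑ j, ∑ k, ∑ l, f i j k l
      = ∑ i, ∑ j, ∑ l, ∑ k, f i j k l :=
        Finset.sum_congr rfl fun i _ => Finset.sum_congr rfl fun j _ => Finset.sum_comm
    _ = ∑ i, ∑ l, ∑ j, ∑ k, f i j k l :=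
        Finset.sum_congr rfl fun i _ => Finset.sum_comm
    _ = ∑ l, ∑ i, ∑ j, ∑ k, f i j k l := Finset.sum_comm

lemma quad_continuous (A : Fin n → Fin n → ℂ) :
    Continuous (fun w : Metric.sphere (0 : EuclideanSpace ℂ (Fin n)) 1 =>
      ∑ j, ∑ k, A j k * (conj ((w : EuclideanSpace ℂ (Fin n)) j) *
        ((w : EuclideanSpace ℂ (Fin n)) k))) := by
  refine continuous_finset_sum _ fun j _ => continuous_finset_sum _ fun k _ => ?_
  exact continuous_const.mul (((continuous_coord j).star).mul (continuous_coord k))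

lemma quad_integrable (A : Fin n → Fin n → ℂ) :
    Integrable (fun w : Metric.sphere (0 : EuclideanSpace ℂ (Fin n)) 1 =>
      ∑ j, ∑ k, A j k * (conj ((w : EuclideanSpace ℂ (Fin n)) j) *
        ((w : EuclideanSpace ℂ (Fin n)) k))) (sphereMeasure n) :=
  integrable_finset_sum _ fun j _ => integrable_finset_sum _ fun k _ =>
    ((integrable_mom j k).const_mul _)

lemma quad_re_integrable (A : Fin n → Fin n → ℂ) :
    Integrable (fun w : Metric.sphere (0 : EuclideanSpace ℂ (Fin n)) 1 =>
      (∑ j, ∑ k, A j k * (conj ((w : EuclideanSpace ℂ (Fin n)) j) *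
        ((w : EuclideanSpace ℂ (Fin n)) k))).re) (sphereMeasure n) := by
  apply Continuous.integrable_of_hasCompactSupport
  · exact Complex.continuous_re.comp (quad_continuous A)
  · exact HasCompactSupport.of_compactSpace _

lemma integral_quad (hn : 0 < n) (A : Fin n → Fin n → ℂ) :
    ∫ w, (∑ j, ∑ k, A j k * (conj ((w : EuclideanSpace ℂ (Fin n)) j) *
        ((w : EuclideanSpace ℂ (Fin n)) k))) ∂(sphereMeasure n)
      = (∑ j, A j j) * ((((sphereMeasure n) univ).toReal / n : ℝ) : ℂ) := by
  rw [integral_finset_sum _ (fun j _ => integrable_finset_sum _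
    (fun k _ => (integrable_mom j k).const_mul _))]
  have h1 : ∀ j : Fin n, ∫ w, ∑ k, A j k * (conj ((w : EuclideanSpace ℂ (Fin n)) j) *
      ((w : EuclideanSpace ℂ (Fin n)) k)) ∂(sphereMeasure n)
      = A j j * ((((sphereMeasure n) univ).toReal / n : ℝ) : ℂ) := by
    intro j
    rw [integral_finset_sum _ (fun k _ => (integrable_mom j k).const_mul _)]
    have h2 : ∀ k : Fin n, ∫ w, A j k * (conj ((w : EuclideanSpace ℂ (Fin n)) j) *
        ((w : EuclideanSpace ℂ (Fin n)) k)) ∂(sphereMeasure n)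
        = if j = k then A j k * ((((sphereMeasure n) univ).toReal / n : ℝ) : ℂ) else 0 := by
      intro k
      rw [integral_const_mul, moment hn j k]
      by_cases h : j = k <;> simp [h]
    rw [Finset.sum_congr rfl fun k _ => h2 k]
    simp
  rw [Finset.sum_congr rfl fun j _ => h1 j, ← Finset.sum_mul]

lemma average_quad (hn : 0 < n) (A : Fin n → Fin n → ℂ) :
    (⨍ w, (∑ j, ∑ k, A j k * (conj ((w : EuclideanSpace ℂ (Fin n)) j) *
        ((w : EuclideanSpace ℂ (Fin n)) k))).re ∂(sphereMeasure n))
      = (∑ j, A j j).re / n := by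
  have hint := quad_integrable (n := n) A
  have hre : ∫ w, (∑ j, ∑ k, A j k * (conj ((w : EuclideanSpace ℂ (Fin n)) j) *
        ((w : EuclideanSpace ℂ (Fin n)) k))).re ∂(sphereMeasure n)
      = (∫ w, (∑ j, ∑ k, A j k * (conj ((w : EuclideanSpace ℂ (Fin n)) j) *
        ((w : EuclideanSpace ℂ (Fin n)) k))) ∂(sphereMeasure n)).re :=
    Complex.reCLM.integral_comp_comm hint
  rw [average_eq, smul_eq_mul, hre, integral_quad hn A]
  have hc : 0 < ((sphereMeasure n) univ).toReal :=
    ENNReal.toReal_pos (sphereMeasure_univ_ne_zero hn) (measure_ne_top _ _)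
  have hn' : ((n : ℝ)) ≠ 0 := Nat.cast_ne_zero.mpr hn.ne'
  rw [Complex.mul_re]
  simp only [Complex.ofReal_re, Complex.ofReal_im, mul_zero, sub_zero]
  rw [measureReal_def]
  field_simp

variable {M : ComplexManifoldModel n}

/-- coefficient matrix of the quadratic form in the second slot of `hbcAlt` -/
def A1 (g : HermitianMetricModel n M) (t : ℝ) (f : g.Frame) (v : Fin n → ℂ) :
    Fin n → Fin n → ℂ :=
  fun j k => (∑ i, ∑ l, g.R t f i j k l * v i * conj (v l)) /
    (((∑ i, Complex.normSq (v i) : ℝ)) : ℂ)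

/-- coefficient matrix of the quadratic form in the first slot of `hbcAlt` -/
def A2 (g : HermitianMetricModel n M) (t : ℝ) (f : g.Frame) (w : Fin n → ℂ) :
    Fin n → Fin n → ℂ :=
  fun l i => (∑ j, ∑ k, g.R t f i j k l * conj (w j) * (w k)) /
    (((∑ i, Complex.normSq (w i) : ℝ)) : ℂ)

lemma hbc_eq1 (g : HermitianMetricModel n M) (t : ℝ) (f : g.Frame) (v : Fin n → ℂ)
    (w : Metric.sphere (0 : EuclideanSpace ℂ (Fin n)) 1) :
    g.hbcAlt t f v (fun i => (w : EuclideanSpace ℂ (Fin n)) i)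
      = (∑ j, ∑ k, A1 g t f v j k * (conj ((w : EuclideanSpace ℂ (Fin n)) j) *
          ((w : EuclideanSpace ℂ (Fin n)) k))).re := by
  have hw1 : ∑ i, Complex.normSq ((w : EuclideanSpace ℂ (Fin n)) i) = 1 :=
    sum_normSq_coord w
  rw [HermitianMetricModel.hbcAlt, hw1, mul_one]
  have hnum : (∑ j, ∑ k, A1 g t f v j k * (conj ((w : EuclideanSpace ℂ (Fin n)) j) *
        ((w : EuclideanSpace ℂ (Fin n)) k)))
      = (∑ i, ∑ j, ∑ k, ∑ l, g.R t f i j k l * v i *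
          conj ((w : EuclideanSpace ℂ (Fin n)) j) * ((w : EuclideanSpace ℂ (Fin n)) k) *
          conj (v l)) / (((∑ i, Complex.normSq (v i) : ℝ)) : ℂ) := by
    calc (∑ j, ∑ k, A1 g t f v j k * (conj ((w : EuclideanSpace ℂ (Fin n)) j) *
          ((w : EuclideanSpace ℂ (Fin n)) k)))
        = ∑ j, ∑ k, (∑ i, ∑ l, g.R t f i j k l * v i *
            conj ((w : EuclideanSpace ℂ (Fin n)) j) * ((w : EuclideanSpace ℂ (Fin n)) k) *
            conj (v l)) / (((∑ i, Complex.normSq (v i) : ℝ)) : ℂ) := by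
          refine Finset.sum_congr rfl fun j _ => Finset.sum_congr rfl fun k _ => ?_
          simp only [A1]
          rw [div_mul_eq_mul_div]
          congr 1
          rw [Finset.sum_mul]
          refine Finset.sum_congr rfl fun i _ => ?_
          rw [Finset.sum_mul]
          refine Finset.sum_congr rfl fun l _ => ?_
          ring
      _ = (∑ j, ∑ k, ∑ i, ∑ l, g.R t f i j k l * v i *
            conj ((w : EuclideanSpace ℂ (Fin n)) j) * ((w : EuclideanSpace ℂ (Fin n)) k) *
            conj (v l)) / (((∑ i, Complex.normSq (v i) : ℝ)) : ℂ) := by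
          simp only [← Finset.sum_div]
      _ = _ := by
          rw [sum_swap4_left (fun i j k l => g.R t f i j k l * v i *
            conj ((w : EuclideanSpace ℂ (Fin n)) j) * ((w : EuclideanSpace ℂ (Fin n)) k) *
            conj (v l))]
  rw [hnum, Complex.div_ofReal_re]

lemma hbc_eq2 (g : HermitianMetricModel n M) (t : ℝ) (f : g.Frame) (w : Fin n → ℂ)
    (u : Metric.sphere (0 : EuclideanSpace ℂ (Fin n)) 1) :
    g.hbcAlt t f (fun i => (u : EuclideanSpace ℂ (Fin n)) i) w
      = (∑ l, ∑ i, A2 g t f w l i * (conj ((u : EuclideanSpace ℂ (Fin n)) l) *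
          ((u : EuclideanSpace ℂ (Fin n)) i))).re := by
  have hu1 : ∑ i, Complex.normSq ((u : EuclideanSpace ℂ (Fin n)) i) = 1 :=
    sum_normSq_coord u
  rw [HermitianMetricModel.hbcAlt, hu1, one_mul]
  have hnum : (∑ l, ∑ i, A2 g t f w l i * (conj ((u : EuclideanSpace ℂ (Fin n)) l) *
        ((u : EuclideanSpace ℂ (Fin n)) i)))
      = (∑ i, ∑ j, ∑ k, ∑ l, g.R t f i j k l * ((u : EuclideanSpace ℂ (Fin n)) i) *
          conj (w j) * (w k) * conj ((u : EuclideanSpace ℂ (Fin n)) l)) /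
          (((∑ i, Complex.normSq (w i) : ℝ)) : ℂ) := by
    calc (∑ l, ∑ i, A2 g t f w l i * (conj ((u : EuclideanSpace ℂ (Fin n)) l) *
          ((u : EuclideanSpace ℂ (Fin n)) i)))
        = ∑ l, ∑ i, (∑ j, ∑ k, g.R t f i j k l * ((u : EuclideanSpace ℂ (Fin n)) i) *
            conj (w j) * (w k) * conj ((u : EuclideanSpace ℂ (Fin n)) l)) /
            (((∑ i, Complex.normSq (w i) : ℝ)) : ℂ) := by
          refine Finset.sum_congr rfl fun l _ => Finset.sum_congr rfl fun i _ => ?_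
          simp only [A2]
          rw [div_mul_eq_mul_div]
          congr 1
          rw [Finset.sum_mul]
          refine Finset.sum_congr rfl fun j _ => ?_
          rw [Finset.sum_mul]
          refine Finset.sum_congr rfl fun k _ => ?_
          ring
      _ = (∑ l, ∑ i, ∑ j, ∑ k, g.R t f i j k l * ((u : EuclideanSpace ℂ (Fin n)) i) *
            conj (w j) * (w k) * conj ((u : EuclideanSpace ℂ (Fin n)) l)) /
            (((∑ i, Complex.normSq (w i) : ℝ)) : ℂ) := by
          simp only [← Finset.sum_div]
      _ = _ := by
          rw [sum_swap4_last (fun i j k l => g.R t f i j k l *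
            ((u : EuclideanSpace ℂ (Fin n)) i) * conj (w j) * (w k) *
            conj ((u : EuclideanSpace ℂ (Fin n)) l))]
  rw [hnum, Complex.div_ofReal_re]

lemma bullet1 (hn : 0 < n) (g : HermitianMetricModel n M) (t : ℝ) (f : g.Frame)
    (v : Fin n → ℂ) (hv : v ≠ 0) :
    (⨍ w : Metric.sphere (0 : EuclideanSpace ℂ (Fin n)) 1,
        g.hbcAlt t f v (fun i => (w : EuclideanSpace ℂ (Fin n)) i) ∂(sphereMeasure n)) =
      (∑ i, ∑ l, g.gRic3 t f i l * v i * conj (v l)).re /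
        ((n : ℝ) * ∑ i, Complex.normSq (v i)) := by
  simp only [hbc_eq1 g t f v]
  rw [average_quad hn (A1 g t f v)]
  have hdiag : ∑ j, A1 g t f v j j
      = (∑ i, ∑ l, g.gRic3 t f i l * v i * conj (v l)) /
          (((∑ i, Complex.normSq (v i) : ℝ)) : ℂ) := by
    simp only [A1]
    rw [← Finset.sum_div]
    congr 1
    rw [Finset.sum_comm]
    refine Finset.sum_congr rfl fun i _ => ?_
    rw [Finset.sum_comm]
    refine Finset.sum_congr rfl fun l _ => ?_
    simp only [HermitianMetricModel.gRic3]
    rw [Finset.sum_mul, Finset.sum_mul]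
  rw [hdiag, Complex.div_ofReal_re, div_div,
    mul_comm (∑ i, Complex.normSq (v i)) ((n : ℝ))]

lemma bullet2 (hn : 0 < n) (g : HermitianMetricModel n M) (t : ℝ) (f : g.Frame)
    (w : Fin n → ℂ) (hw : w ≠ 0) :
    (⨍ v : Metric.sphere (0 : EuclideanSpace ℂ (Fin n)) 1,
        g.hbcAlt t f (fun i => (v : EuclideanSpace ℂ (Fin n)) i) w ∂(sphereMeasure n)) =
      (∑ k, ∑ j, g.gRic4 t f k j * w k * conj (w j)).re /
        ((n : ℝ) * ∑ i, Complex.normSq (w i)) := by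
  simp only [hbc_eq2 g t f w]
  rw [average_quad hn (fun l i => A2 g t f w l i)]
  have hdiag : ∑ l, A2 g t f w l l
      = (∑ k, ∑ j, g.gRic4 t f k j * w k * conj (w j)) /
          (((∑ i, Complex.normSq (w i) : ℝ)) : ℂ) := by
    simp only [A2]
    rw [← Finset.sum_div]
    congr 1
    rw [sum_swap3 (fun l j k => g.R t f l j k l * conj (w j) * (w k))]
    refine Finset.sum_congr rfl fun k _ => Finset.sum_congr rfl fun j _ => ?_
    simp only [HermitianMetricModel.gRic4]
    rw [Finset.sum_mul, Finset.sum_mul]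
    refine Finset.sum_congr rfl fun i _ => ?_
    ring
  rw [hdiag, Complex.div_ofReal_re, div_div,
    mul_comm (∑ i, Complex.normSq (w i)) ((n : ℝ))]

lemma int1 (g : HermitianMetricModel n M) (t : ℝ) (f : g.Frame) (v : Fin n → ℂ) :
    Integrable (fun w : Metric.sphere (0 : EuclideanSpace ℂ (Fin n)) 1 =>
      g.hbcAlt t f v (fun i => (w : EuclideanSpace ℂ (Fin n)) i)) (sphereMeasure n) := by
  simp only [hbc_eq1 g t f v]
  exact quad_re_integrable (A1 g t f v)

lemma int2 (g : HermitianMetricModel n M) (t : ℝ) (f : g.Frame) (w : Fin n → ℂ) :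
    Integrable (fun u : Metric.sphere (0 : EuclideanSpace ℂ (Fin n)) 1 =>
      g.hbcAlt t f (fun i => (u : EuclideanSpace ℂ (Fin n)) i) w) (sphereMeasure n) := by
  simp only [hbc_eq2 g t f w]
  exact quad_re_integrable (fun l i => A2 g t f w l i)

lemma avg_pos (hn : 0 < n)
    {F : Metric.sphere (0 : EuclideanSpace ℂ (Fin n)) 1 → ℝ}
    (hint : Integrable F (sphereMeasure n)) (hF : ∀ w, 0 < F w) :
    0 < ⨍ w, F w ∂(sphereMeasure n) := by
  rw [average_eq, smul_eq_mul]
  have hc : 0 < ((sphereMeasure n) univ).toReal :=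
    ENNReal.toReal_pos (sphereMeasure_univ_ne_zero hn) (measure_ne_top _ _)
  refine mul_pos (inv_pos.mpr hc) ?_
  rw [integral_pos_iff_support_of_nonneg (fun w => (hF w).le) hint]
  have hsupp : Function.support F = univ := by
    ext x; simp [Function.mem_support, (hF x).ne']
  rw [hsupp]
  exact pos_iff_ne_zero.mpr (sphereMeasure_univ_ne_zero hn)

lemma avg_neg (hn : 0 < n)
    {F : Metric.sphere (0 : EuclideanSpace ℂ (Fin n)) 1 → ℝ}
    (hint : Integrable F (sphereMeasure n)) (hF : ∀ w, F w < 0) :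
    (⨍ w, F w ∂(sphereMeasure n)) < 0 := by
  have h := avg_pos hn hint.neg (fun w => by
    simp only [Pi.neg_apply]; linarith [hF w])
  rw [average_eq, smul_eq_mul] at h ⊢
  simp only [Pi.neg_apply] at h
  rw [integral_neg] at h
  nlinarith

lemma avg_nonneg {F : Metric.sphere (0 : EuclideanSpace ℂ (Fin n)) 1 → ℝ}
    (hF : ∀ w, 0 ≤ F w) : 0 ≤ ⨍ w, F w ∂(sphereMeasure n) := by
  rw [average_eq, smul_eq_mul]
  exact mul_nonneg (inv_nonneg.mpr ENNReal.toReal_nonneg) (integral_nonneg hF)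

lemma avg_nonpos {F : Metric.sphere (0 : EuclideanSpace ℂ (Fin n)) 1 → ℝ}
    (hF : ∀ w, F w ≤ 0) : (⨍ w, F w ∂(sphereMeasure n)) ≤ 0 := by
  rw [average_eq, smul_eq_mul]
  have h1 : (0:ℝ) ≤ (((sphereMeasure n) univ).toReal)⁻¹ :=
    inv_nonneg.mpr ENNReal.toReal_nonneg
  have h2 : ∫ w, F w ∂(sphereMeasure n) ≤ 0 := integral_nonpos hF
  rw [measureReal_def]
  nlinarith

lemma key3 (hn : 0 < n) (g : HermitianMetricModel n M) (t : ℝ) (f : g.Frame)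
    (v : Fin n → ℂ) (hv : v ≠ 0) :
    (∑ i, ∑ j, g.gRic3 t f i j * v i * conj (v j)).re
      = (⨍ w : Metric.sphere (0 : EuclideanSpace ℂ (Fin n)) 1,
          g.hbcAlt t f v (fun i => (w : EuclideanSpace ℂ (Fin n)) i) ∂(sphereMeasure n)) *
        ((n : ℝ) * ∑ i, Complex.normSq (v i)) := by
  have h := bullet1 hn g t f v hv
  have hd : ((n : ℝ) * ∑ i, Complex.normSq (v i)) ≠ 0 :=
    (mul_pos (Nat.cast_pos.mpr hn) (sum_normSq_pos v hv)).ne'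
  rw [h, div_mul_cancel₀ _ hd]

lemma key4 (hn : 0 < n) (g : HermitianMetricModel n M) (t : ℝ) (f : g.Frame)
    (w : Fin n → ℂ) (hw : w ≠ 0) :
    (∑ i, ∑ j, g.gRic4 t f i j * w i * conj (w j)).re
      = (⨍ u : Metric.sphere (0 : EuclideanSpace ℂ (Fin n)) 1,
          g.hbcAlt t f (fun i => (u : EuclideanSpace ℂ (Fin n)) i) w ∂(sphereMeasure n)) *
        ((n : ℝ) * ∑ i, Complex.normSq (w i)) := by
  have h := bullet2 hn g t f w hw
  have hd : ((n : ℝ) * ∑ i, Complex.normSq (w i)) ≠ 0 :=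
    (mul_pos (Nat.cast_pos.mpr hn) (sum_normSq_pos w hw)).ne'
  rw [h, div_mul_cancel₀ _ hd]

end GaudAux

/-- **Proposition (the altered holomorphic bisectional curvature dominates `Ric⁽³⁾` and
`Ric⁽⁴⁾`).**
Let `(X, ω)` be a compact Hermitian manifold of complex dimension `n` and fix a point
`x ∈ X` (equivalently a local unitary frame `f` at `x`).  For all nonzero
`v, w ∈ T_x^{1,0}X`: the average over the unit sphere of `w ↦ ᵗH̃BC_ω(v, w)` equals
`(1/(n|v|²))·Σ ᵗR_{ik̄kℓ̄} v_i v̄_ℓ` (the `ᵗRic⁽³⁾`-quadratic form), and the average of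
`v ↦ ᵗH̃BC_ω(v, w)` equals `(1/(n|w|²))·Σ ᵗR_{ij̄kī} w_k w̄_j` (the `ᵗRic⁽⁴⁾`-quadratic
form).  In particular the `t`-Gauduchon altered holomorphic bisectional curvature
dominates the third and fourth `t`-Gauduchon Ricci curvatures. -/
theorem gauduchon_altered_hbc_dominates_ric3_ric4
    {n : ℕ} (hn : 0 < n) (M : ComplexManifoldModel n) (g : HermitianMetricModel n M)
    (hcpt : M.IsCompact) (t : ℝ) :
    (∀ (f : g.Frame) (v : Fin n → ℂ), v ≠ 0 →
      (⨍ w : Metric.sphere (0 : EuclideanSpace ℂ (Fin n)) 1,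
          g.hbcAlt t f v (fun i => (w : EuclideanSpace ℂ (Fin n)) i) ∂(sphereMeasure n)) =
        (∑ i, ∑ l, g.gRic3 t f i l * v i * conj (v l)).re /
          ((n : ℝ) * ∑ i, Complex.normSq (v i))) ∧
    (∀ (f : g.Frame) (w : Fin n → ℂ), w ≠ 0 →
      (⨍ v : Metric.sphere (0 : EuclideanSpace ℂ (Fin n)) 1,
          g.hbcAlt t f (fun i => (v : EuclideanSpace ℂ (Fin n)) i) w ∂(sphereMeasure n)) =
        (∑ k, ∑ j, g.gRic4 t f k j * w k * conj (w j)).re /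
          ((n : ℝ) * ∑ i, Complex.normSq (w i))) ∧
    ((∀ (f : g.Frame) (u v : Fin n → ℂ), u ≠ 0 → v ≠ 0 → 0 < g.hbcAlt t f u v) →
      g.FormPos (g.gRic3 t) ∧ g.FormPos (g.gRic4 t)) ∧
    ((∀ (f : g.Frame) (u v : Fin n → ℂ), u ≠ 0 → v ≠ 0 → g.hbcAlt t f u v < 0) →
      g.FormNeg (g.gRic3 t) ∧ g.FormNeg (g.gRic4 t)) ∧
    ((∀ (f : g.Frame) (u v : Fin n → ℂ), u ≠ 0 → v ≠ 0 → 0 ≤ g.hbcAlt t f u v) →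
      g.FormNonneg (g.gRic3 t) ∧ g.FormNonneg (g.gRic4 t)) ∧
    ((∀ (f : g.Frame) (u v : Fin n → ℂ), u ≠ 0 → v ≠ 0 → g.hbcAlt t f u v ≤ 0) →
      g.FormNonpos (g.gRic3 t) ∧ g.FormNonpos (g.gRic4 t)) := by
  have hd3 : ∀ (f : g.Frame) (v : Fin n → ℂ), v ≠ 0 →
      (0:ℝ) < (n : ℝ) * ∑ i, Complex.normSq (v i) := fun f v hv =>
    mul_pos (Nat.cast_pos.mpr hn) (GaudAux.sum_normSq_pos v hv)
  refine ⟨fun f v hv => GaudAux.bullet1 hn g t f v hv,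
    fun f w hw => GaudAux.bullet2 hn g t f w hw, ?_, ?_, ?_, ?_⟩
  · intro hp
    constructor
    · refine fun f v hv => ?_
      rw [GaudAux.key3 hn g t f v hv]
      exact mul_pos (GaudAux.avg_pos hn (GaudAux.int1 g t f v)
        (fun w => hp f v _ hv (GaudAux.coordvec_ne_zero w))) (hd3 f v hv)
    · refine fun f w hw => ?_
      rw [GaudAux.key4 hn g t f w hw]
      exact mul_pos (GaudAux.avg_pos hn (GaudAux.int2 g t f w)
        (fun u => hp f _ w (GaudAux.coordvec_ne_zero u) hw)) (hd3 f w hw)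
  · intro hp
    constructor
    · refine fun f v hv => ?_
      rw [GaudAux.key3 hn g t f v hv]
      exact mul_neg_of_neg_of_pos (GaudAux.avg_neg hn (GaudAux.int1 g t f v)
        (fun w => hp f v _ hv (GaudAux.coordvec_ne_zero w))) (hd3 f v hv)
    · refine fun f w hw => ?_
      rw [GaudAux.key4 hn g t f w hw]
      exact mul_neg_of_neg_of_pos (GaudAux.avg_neg hn (GaudAux.int2 g t f w)
        (fun u => hp f _ w (GaudAux.coordvec_ne_zero u) hw)) (hd3 f w hw)
  · intro hp
    constructor
    · refine fun f v => ?_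
      by_cases hv : v = 0
      · subst hv; simp
      · rw [GaudAux.key3 hn g t f v hv]
        exact mul_nonneg (GaudAux.avg_nonneg
          (fun w => hp f v _ hv (GaudAux.coordvec_ne_zero w))) (hd3 f v hv).le
    · refine fun f w => ?_
      by_cases hw : w = 0
      · subst hw; simp
      · rw [GaudAux.key4 hn g t f w hw]
        exact mul_nonneg (GaudAux.avg_nonneg
          (fun u => hp f _ w (GaudAux.coordvec_ne_zero u) hw)) (hd3 f w hw).le
  · intro hp
    constructor
    · refine fun f v => ?_
      by_cases hv : v = 0
      · subst hv; simp
      · rw [GaudAux.key3 hn g t f v hv]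
        exact mul_nonpos_iff.mpr (Or.inr ⟨(GaudAux.avg_nonpos
          (fun w => hp f v _ hv (GaudAux.coordvec_ne_zero w))), (hd3 f v hv).le⟩)
    · refine fun f w => ?_
      by_cases hw : w = 0
      · subst hw; simp
      · rw [GaudAux.key4 hn g t f w hw]
        exact mul_nonpos_iff.mpr (Or.inr ⟨(GaudAux.avg_nonpos
          (fun u => hp f _ w (GaudAux.coordvec_ne_zero u) hw)), (hd3 f w hw).le⟩)
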